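/- Path integral representation of the KL-control value function: under deterministic dynamics, the exponentiated value function Z_t(x) := exp(-J_t(x)/λ) satisfies the linear backward recursion Z_t(x_t) = ∫_{U_t} exp(-C_t(x_t,u_t)/λ) Z_{t+1}(F_t(x_t,u_t)) R(du_t|x_t), and by recursive substitution J_t(x_t) = -λ log E_R[ exp( -(1/λ) C_{t:T}(X_{t:T}, U_{t:T-1}) ) ], where the expectation is over trajectories generated from x_t under the reference policy R and C_{t:T} = Σ_{k=t}^{T-1} C_k(x_k,u_k) + C_T(x_T). -/

import Mathlib

open MeasureTheory

section PathIntegral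

variable {X U : Type*} [MeasurableSpace X] [MeasurableSpace U]

/-- The KL-control value function `J`, defined by the nonlinear Bellman recursion
`J_t(x) = -λ log ∫ exp(-(C_t(x,u) + J_{t+1}(F_t(x,u)))/λ) R(du|x)` with terminal
condition `C_T`.  It is indexed by the number `k` of remaining steps and the
current time `t` (so `J_t` of the paper, `t = T - k`, is `klValue … k t`). -/
noncomputable def klValue (C : ℕ → X → U → ℝ) (CT : X → ℝ) (F : ℕ → X → U → X)
    (R : ℕ → X → Measure U) (lam : ℝ) : ℕ → ℕ → X → ℝ
  | 0, _, x => CT x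
  | k + 1, t, x =>
      -lam * Real.log (∫ u,
        Real.exp (-(C t x u + klValue C CT F R lam k (t + 1) (F t x u)) / lam) ∂(R t x))

/-- The reference trajectory measure on control sequences of length `k` generated
from state `x` at time `t` by the reference policy `R` and the deterministic
dynamics `F`. -/
noncomputable def refTraj (F : ℕ → X → U → X) (R : ℕ → X → Measure U) :
    (k : ℕ) → ℕ → X → Measure (Fin k → U)
  | 0, _, _ => Measure.dirac fun i => i.elim0
  | k + 1, t, x =>
      (R t x).bind fun u => (refTraj F R k (t + 1) (F t x u)).map (Fin.cons u)

/-- The path cost `C_{t:T} = Σ_{k=t}^{T-1} C_k(x_k,u_k) + C_T(x_T)` of a control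
sequence of length `k` applied from state `x` at time `t` under dynamics `F`. -/
def pathCost (C : ℕ → X → U → ℝ) (CT : X → ℝ) (F : ℕ → X → U → X) :
    (k : ℕ) → ℕ → X → (Fin k → U) → ℝ
  | 0, _, x, _ => CT x
  | k + 1, t, x, us =>
      C t x (us 0) + pathCost C CT F k (t + 1) (F t x (us 0)) fun i => us i.succ


section Aux
variable (C : ℕ → X → U → ℝ) (CT : X → ℝ) (F : ℕ → X → U → X)
    (R : ℕ → X → Measure U) (lam : ℝ)

lemma integral_exp_bdd {α : Type*} [MeasurableSpace α] (μ : Measure α) [IsProbabilityMeasure μ]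
    (g : α → ℝ) (hg : Measurable g) (B : ℝ) (hB : ∀ a, |g a| ≤ B) :
    Integrable (fun a => Real.exp (g a)) μ ∧
      Real.exp (-B) ≤ (∫ a, Real.exp (g a) ∂μ) ∧
      (∫ a, Real.exp (g a) ∂μ) ≤ Real.exp B := by
  have hub : ∀ a, Real.exp (g a) ≤ Real.exp B := fun a =>
    Real.exp_le_exp.2 ((abs_le.1 (hB a)).2)
  have hlb : ∀ a, Real.exp (-B) ≤ Real.exp (g a) := fun a =>
    Real.exp_le_exp.2 ((abs_le.1 (hB a)).1)
  have hint : Integrable (fun a => Real.exp (g a)) μ := by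
    refine ⟨(Real.measurable_exp.comp hg).aestronglyMeasurable, ?_⟩
    refine HasFiniteIntegral.of_bounded (C := Real.exp B) (Filter.Eventually.of_forall fun a => ?_)
    rw [Real.norm_eq_abs, abs_of_pos (Real.exp_pos _)]
    exact hub a
  refine ⟨hint, ?_, ?_⟩
  · calc Real.exp (-B) = ∫ _, Real.exp (-B) ∂μ := by simp
      _ ≤ _ := integral_mono (integrable_const _) hint hlb
  · calc (∫ a, Real.exp (g a) ∂μ) ≤ ∫ _, Real.exp B ∂μ :=
        integral_mono hint (integrable_const _) hub
      _ = Real.exp B := by simp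

variable (C : ℕ → X → U → ℝ) (CT : X → ℝ) (F : ℕ → X → U → X)
    (R : ℕ → X → Measure U) (lam : ℝ)

lemma klValue_measurable
    (hRprob : ∀ t x, IsProbabilityMeasure (R t x))
    (hRmeas : ∀ t, Measurable (R t))
    (hFmeas : ∀ t, Measurable (Function.uncurry (F t)))
    (hCmeas : ∀ t, Measurable (Function.uncurry (C t)))
    (hCTmeas : Measurable CT) :
    ∀ k t, Measurable (klValue C CT F R lam k t) := by
  intro k
  induction k with
  | zero => intro t; exact hCTmeas
  | succ k ih =>
    intro t
    let κ : ProbabilityTheory.Kernel X U := ⟨R t, hRmeas t⟩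
    haveI : ProbabilityTheory.IsMarkovKernel κ := ⟨fun x => hRprob t x⟩
    have hf : StronglyMeasurable fun p : X × U =>
        Real.exp (-(C t p.1 p.2 + klValue C CT F R lam k (t + 1) (F t p.1 p.2)) / lam) := by
      refine (Real.measurable_exp.comp ?_).stronglyMeasurable
      exact (((hCmeas t).add ((ih (t+1)).comp (hFmeas t))).neg.div_const lam)
    have hI : Measurable fun x => ∫ u,
        Real.exp (-(C t x u + klValue C CT F R lam k (t + 1) (F t x u)) / lam) ∂(R t x) := by
      have := hf.integral_kernel_prod_right' (κ := κ)
      exact this.measurable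
    exact measurable_const.mul (Real.measurable_log.comp hI)

lemma klValue_abs_le (hlam : 0 < lam)
    (hRprob : ∀ t x, IsProbabilityMeasure (R t x))
    (hRmeas : ∀ t, Measurable (R t))
    (hFmeas : ∀ t, Measurable (Function.uncurry (F t)))
    (hCmeas : ∀ t, Measurable (Function.uncurry (C t)))
    (hCTmeas : Measurable CT)
    (MC MCT : ℝ) (hC : ∀ t x u, |C t x u| ≤ MC) (hCT : ∀ x, |CT x| ≤ MCT) :
    ∀ k t x, |klValue C CT F R lam k t x| ≤ MCT + k * MC := by
  intro k
  induction k with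
  | zero => intro t x; simpa [klValue] using hCT x
  | succ k ih =>
    intro t x
    haveI := hRprob t x
    set B := MCT + k * MC with hB
    have hg : Measurable fun u =>
        -(C t x u + klValue C CT F R lam k (t + 1) (F t x u)) / lam := by
      have hJ := klValue_measurable C CT F R lam hRprob hRmeas hFmeas hCmeas hCTmeas k (t+1)
      have hFx : Measurable fun u => F t x u :=
        (hFmeas t).comp (measurable_const.prodMk measurable_id)
      have hCx : Measurable fun u => C t x u :=
        (hCmeas t).comp (measurable_const.prodMk measurable_id)
      exact ((hCx.add (hJ.comp hFx)).neg.div_const lam)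
    have hBb : ∀ u, |(-(C t x u + klValue C CT F R lam k (t + 1) (F t x u)) / lam)|
        ≤ (MC + B) / lam := by
      intro u
      rw [abs_div, abs_neg, abs_of_pos hlam]
      gcongr
      exact (abs_add_le _ _).trans (add_le_add (hC t x u) (ih (t+1) (F t x u)))
    obtain ⟨hint, hlb, hub⟩ := integral_exp_bdd (R t x) _ hg ((MC + B)/lam) hBb
    set I := ∫ u, Real.exp
        (-(C t x u + klValue C CT F R lam k (t + 1) (F t x u)) / lam) ∂(R t x) with hI
    have hIpos : 0 < I := lt_of_lt_of_le (Real.exp_pos _) hlb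
    have hlog : |Real.log I| ≤ (MC + B) / lam := by
      rw [abs_le]
      constructor
      · exact (Real.le_log_iff_exp_le hIpos).2 hlb
      · exact (Real.log_le_iff_le_exp hIpos).2 hub
    have : klValue C CT F R lam (k+1) t x = -lam * Real.log I := rfl
    rw [this, abs_mul, abs_neg, abs_of_pos hlam]
    refine le_trans (mul_le_mul_of_nonneg_left hlog hlam.le) (le_of_eq ?_)
    rw [mul_div_cancel₀ _ (ne_of_gt hlam), hB]
    push_cast; ring

/-- Non-dependent version of `Fin.cons`. -/
def finCons {k : ℕ} (u : U) (vs : Fin k → U) : Fin (k+1) → U := Fin.cons u vs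

lemma measurable_finCons' {k : ℕ} :
    Measurable fun p : U × (Fin k → U) => finCons p.1 p.2 := by
  unfold finCons
  apply measurable_pi_lambda
  intro i
  refine Fin.cases ?_ ?_ i
  · simpa using measurable_fst
  · intro j; simp; exact (measurable_pi_apply j).comp measurable_snd


lemma pathCost_measurable
    (hFmeas : ∀ t, Measurable (Function.uncurry (F t)))
    (hCmeas : ∀ t, Measurable (Function.uncurry (C t)))
    (hCTmeas : Measurable CT) :
    ∀ (k t : ℕ), Measurable fun p : X × (Fin k → U) => pathCost C CT F k t p.1 p.2 := by
  intro k
  induction k with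
  | zero => intro t; exact hCTmeas.comp measurable_fst
  | succ k ih =>
    intro t
    have h1 : Measurable fun p : X × (Fin (k+1) → U) => (p.1, p.2 0) :=
      measurable_fst.prodMk ((measurable_pi_apply 0).comp measurable_snd)
    have h2 : Measurable fun p : X × (Fin (k+1) → U) =>
        (F t p.1 (p.2 0), fun i : Fin k => p.2 i.succ) :=
      ((hFmeas t).comp h1).prodMk
        (measurable_pi_lambda _ fun i => (measurable_pi_apply i.succ).comp measurable_snd)
    have heq : (fun p : X × (Fin (k+1) → U) => pathCost C CT F (k+1) t p.1 p.2)
        = fun p => C t p.1 (p.2 0) +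
            pathCost C CT F k (t+1) (F t p.1 (p.2 0)) (fun i => p.2 i.succ) := rfl
    rw [heq]
    exact ((hCmeas t).comp h1).add ((ih (t+1)).comp h2)

lemma refTraj_measurable_prob
    (hRprob : ∀ t x, IsProbabilityMeasure (R t x))
    (hRmeas : ∀ t, Measurable (R t))
    (hFmeas : ∀ t, Measurable (Function.uncurry (F t))) :
    ∀ k t, Measurable (refTraj F R k t) ∧
      ∀ x, IsProbabilityMeasure (refTraj F R k t x) := by
  intro k
  induction k with
  | zero =>
    intro t
    have h0 : refTraj F R 0 t = fun _ : X => Measure.dirac (fun i : Fin 0 => i.elim0) := rfl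
    rw [h0]
    exact ⟨measurable_const, fun x => inferInstance⟩
  | succ k ih =>
    intro t
    have hκmeas : Measurable fun p : X × U => refTraj F R k (t+1) (F t p.1 p.2) :=
      (ih (t+1)).1.comp (hFmeas t)
    let κ : ProbabilityTheory.Kernel (X × U) (Fin k → U) :=
      ⟨fun p => refTraj F R k (t+1) (F t p.1 p.2), hκmeas⟩
    haveI : ProbabilityTheory.IsMarkovKernel κ := ⟨fun p => (ih (t+1)).2 _⟩
    have hconsu : ∀ u : U, Measurable (finCons u : (Fin k → U) → Fin (k+1) → U) :=
      fun u => measurable_finCons'.comp (measurable_const.prodMk measurable_id)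
    have hg : ∀ x, Measurable fun u : U =>
        (refTraj F R k (t+1) (F t x u)).map (finCons u) := by
      intro x
      apply Measure.measurable_of_measurable_coe
      intro s hs
      let κx : ProbabilityTheory.Kernel U (Fin k → U) :=
        ⟨fun u => refTraj F R k (t+1) (F t x u),
          (ih (t+1)).1.comp ((hFmeas t).comp (measurable_const.prodMk measurable_id))⟩
      haveI : ProbabilityTheory.IsMarkovKernel κx := ⟨fun u => (ih (t+1)).2 _⟩
      have hpre : MeasurableSet
          ((fun p : U × (Fin k → U) => finCons p.1 p.2) ⁻¹' s) :=
        measurable_finCons' hs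
      have heq : (fun u => ((refTraj F R k (t+1) (F t x u)).map (finCons u)) s)
          = fun u => κx u (Prod.mk u ⁻¹'
              ((fun p : U × (Fin k → U) => finCons p.1 p.2) ⁻¹' s)) := by
        funext u
        rw [Measure.map_apply (hconsu u) hs]
        rfl
      rw [heq]
      exact ProbabilityTheory.Kernel.measurable_kernel_prodMk_left hpre
    constructor
    · apply Measure.measurable_of_measurable_coe
      intro s hs
      have heq : (fun x => refTraj F R (k+1) t x s)
          = fun x => ∫⁻ u, refTraj F R k (t+1) (F t x u)
              (finCons u ⁻¹' s) ∂(R t x) := by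
        funext x
        rw [show refTraj F R (k+1) t x
            = (R t x).bind fun u => (refTraj F R k (t+1) (F t x u)).map (finCons u) from rfl,
          Measure.bind_apply hs (hg x).aemeasurable]
        congr 1
        funext u
        rw [Measure.map_apply (hconsu u) hs]
      rw [heq]
      let κR : ProbabilityTheory.Kernel X U := ⟨R t, hRmeas t⟩
      haveI : ProbabilityTheory.IsMarkovKernel κR := ⟨fun x => hRprob t x⟩
      have hT : MeasurableSet {q : (X × U) × (Fin k → U) | finCons q.1.2 q.2 ∈ s} :=
        (measurable_finCons'.comp
          ((measurable_snd.comp measurable_fst).prodMk measurable_snd)) hs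
      have hh : Measurable fun p : X × U =>
          refTraj F R k (t+1) (F t p.1 p.2)
            (finCons p.2 ⁻¹' s) := by
        have := ProbabilityTheory.Kernel.measurable_kernel_prodMk_left (κ := κ) hT
        convert this using 2
        rfl
      exact Measurable.lintegral_kernel_prod_right' (κ := κR) hh
    · intro x
      haveI := hRprob t x
      constructor
      rw [show refTraj F R (k+1) t x
          = (R t x).bind fun u => (refTraj F R k (t+1) (F t x u)).map (finCons u) from rfl,
        Measure.bind_apply MeasurableSet.univ (hg x).aemeasurable]
      have huniv : ∀ u : U,
          ((refTraj F R k (t+1) (F t x u)).map (finCons u)) Set.univ = 1 := by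
        intro u
        haveI := (ih (t+1)).2 (F t x u)
        haveI : IsProbabilityMeasure ((refTraj F R k (t+1) (F t x u)).map (finCons u)) :=
          Measure.isProbabilityMeasure_map (hconsu u).aemeasurable
        exact measure_univ
      simp [huniv]


lemma refTraj_map_measurable
    (hRprob : ∀ t x, IsProbabilityMeasure (R t x))
    (hRmeas : ∀ t, Measurable (R t))
    (hFmeas : ∀ t, Measurable (Function.uncurry (F t)))
    (k s t : ℕ) (x : X) :
    Measurable fun u : U => (refTraj F R k s (F t x u)).map (finCons u) := by
  have hm := (refTraj_measurable_prob F R hRprob hRmeas hFmeas k s).1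
  have hp := (refTraj_measurable_prob F R hRprob hRmeas hFmeas k s).2
  apply Measure.measurable_of_measurable_coe
  intro sset hs
  let κx : ProbabilityTheory.Kernel U (Fin k → U) :=
    ⟨fun u => refTraj F R k s (F t x u),
      hm.comp ((hFmeas t).comp (measurable_const.prodMk measurable_id))⟩
  haveI : ProbabilityTheory.IsMarkovKernel κx := ⟨fun u => hp _⟩
  have hpre : MeasurableSet
      ((fun p : U × (Fin k → U) => finCons p.1 p.2) ⁻¹' sset) :=
    measurable_finCons' hs
  have heq : (fun u => ((refTraj F R k s (F t x u)).map (finCons u)) sset)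
      = fun u => κx u (Prod.mk u ⁻¹'
          ((fun p : U × (Fin k → U) => finCons p.1 p.2) ⁻¹' sset)) := by
    funext u
    have hcu : Measurable (finCons u : (Fin k → U) → Fin (k+1) → U) :=
      measurable_finCons'.comp (measurable_const.prodMk measurable_id)
    rw [Measure.map_apply hcu hs]
    rfl
  rw [heq]
  exact ProbabilityTheory.Kernel.measurable_kernel_prodMk_left hpre

end Aux

/-- Path integral representation of the KL-control value function:
under deterministic dynamics, the exponentiated value function
`Z_t(x) = exp(-J_t(x)/λ)` satisfies the linear backward recursion
`Z_t(x) = ∫ exp(-C_t(x,u)/λ) Z_{t+1}(F_t(x,u)) R(du|x)`, and by recursive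
substitution `J_t(x) = -λ log E_R[exp(-(1/λ) C_{t:T})]`, the expectation being over
reference trajectories from `(x, t)`. -/
theorem klValue_path_integral_representation
    (C : ℕ → X → U → ℝ) (CT : X → ℝ) (F : ℕ → X → U → X)
    (R : ℕ → X → Measure U) (lam : ℝ) (hlam : 0 < lam)
    (hRprob : ∀ t x, IsProbabilityMeasure (R t x))
    (hRmeas : ∀ t, Measurable (R t))
    (hFmeas : ∀ t, Measurable (Function.uncurry (F t)))
    (hCmeas : ∀ t, Measurable (Function.uncurry (C t)))
    (hCTmeas : Measurable CT)
    (hCbdd : ∃ M : ℝ, ∀ t x u, |C t x u| ≤ M)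
    (hCTbdd : ∃ M : ℝ, ∀ x, |CT x| ≤ M) :
    (∀ (k t : ℕ) (x : X),
      Real.exp (-(klValue C CT F R lam (k + 1) t x) / lam) =
        ∫ u, Real.exp (-(C t x u) / lam) *
          Real.exp (-(klValue C CT F R lam k (t + 1) (F t x u)) / lam) ∂(R t x)) ∧
    (∀ (k t : ℕ) (x : X),
      klValue C CT F R lam k t x =
        -lam * Real.log (∫ us,
          Real.exp (-(pathCost C CT F k t x us) / lam) ∂(refTraj F R k t x))) := by
  obtain ⟨MC, hC⟩ := hCbdd
  obtain ⟨MCT, hCT⟩ := hCTbdd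
  have hJm := klValue_measurable C CT F R lam hRprob hRmeas hFmeas hCmeas hCTmeas
  have hJb := klValue_abs_le C CT F R lam hlam hRprob hRmeas hFmeas hCmeas hCTmeas
    MC MCT hC hCT
  have hPC := pathCost_measurable C CT F hFmeas hCmeas hCTmeas
  have hRT := refTraj_measurable_prob F R hRprob hRmeas hFmeas
  have hl0 : lam ≠ 0 := ne_of_gt hlam
  -- basic facts about the one-step integral
  have hgmeas : ∀ (k t : ℕ) (x : X), Measurable fun u : U =>
      -(C t x u + klValue C CT F R lam k (t + 1) (F t x u)) / lam := by
    intro k t x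
    have hFx : Measurable fun u => F t x u :=
      (hFmeas t).comp (measurable_const.prodMk measurable_id)
    have hCx : Measurable fun u => C t x u :=
      (hCmeas t).comp (measurable_const.prodMk measurable_id)
    exact ((hCx.add ((hJm k (t+1)).comp hFx)).neg.div_const lam)
  have hBb : ∀ (k t : ℕ) (x : X) (u : U),
      |(-(C t x u + klValue C CT F R lam k (t + 1) (F t x u)) / lam)|
        ≤ (MC + (MCT + k * MC)) / lam := by
    intro k t x u
    rw [abs_div, abs_neg, abs_of_pos hlam]
    gcongr
    exact (abs_add_le _ _).trans (add_le_add (hC t x u) (hJb k (t+1) (F t x u)))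
  have hIfacts : ∀ (k t : ℕ) (x : X),
      Integrable (fun u => Real.exp
        (-(C t x u + klValue C CT F R lam k (t + 1) (F t x u)) / lam)) (R t x) ∧
      0 < ∫ u, Real.exp
        (-(C t x u + klValue C CT F R lam k (t + 1) (F t x u)) / lam) ∂(R t x) := by
    intro k t x
    haveI := hRprob t x
    obtain ⟨hint, hlb, _⟩ := integral_exp_bdd (R t x) _ (hgmeas k t x)
      ((MC + (MCT + k * MC)) / lam) (hBb k t x)
    exact ⟨hint, lt_of_lt_of_le (Real.exp_pos _) hlb⟩
  -- the linear recursion in plain form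
  have key1 : ∀ (k t : ℕ) (x : X),
      Real.exp (-(klValue C CT F R lam (k + 1) t x) / lam) =
        ∫ u, Real.exp
          (-(C t x u + klValue C CT F R lam k (t + 1) (F t x u)) / lam) ∂(R t x) := by
    intro k t x
    obtain ⟨hint, hIpos⟩ := hIfacts k t x
    have hdef : klValue C CT F R lam (k + 1) t x = -lam * Real.log (∫ u, Real.exp
        (-(C t x u + klValue C CT F R lam k (t + 1) (F t x u)) / lam) ∂(R t x)) := rfl
    rw [hdef]
    rw [show -(-lam * Real.log (∫ u, Real.exp
        (-(C t x u + klValue C CT F R lam k (t + 1) (F t x u)) / lam) ∂(R t x))) / lam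
      = Real.log (∫ u, Real.exp
        (-(C t x u + klValue C CT F R lam k (t + 1) (F t x u)) / lam) ∂(R t x)) by
        field_simp]
    exact Real.exp_log hIpos
  -- key lintegral identity
  have key2 : ∀ (k t : ℕ) (x : X),
      (∫⁻ us, ENNReal.ofReal (Real.exp (-(pathCost C CT F k t x us) / lam))
        ∂(refTraj F R k t x)) =
      ENNReal.ofReal (Real.exp (-(klValue C CT F R lam k t x) / lam)) := by
    intro k
    induction k with
    | zero =>
      intro t x
      have h0 : refTraj F R 0 t x = Measure.dirac (fun i : Fin 0 => i.elim0) := rfl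
      have hpc : ∀ us : Fin 0 → U, pathCost C CT F 0 t x us = CT x := fun _ => rfl
      rw [h0]
      simp only [hpc, lintegral_const]
      rw [show klValue C CT F R lam 0 t x = CT x from rfl]
      simp
    | succ k ih =>
      intro t x
      haveI := hRprob t x
      have hgk : Measurable fun u : U =>
          (refTraj F R k (t+1) (F t x u)).map (finCons u) :=
        refTraj_map_measurable F R hRprob hRmeas hFmeas k (t+1) t x
      have hf : Measurable fun us : Fin (k+1) → U =>
          ENNReal.ofReal (Real.exp (-(pathCost C CT F (k+1) t x us) / lam)) :=
        ENNReal.measurable_ofReal.comp (Real.measurable_exp.comp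
          ((((hPC (k+1) t).comp (measurable_const.prodMk measurable_id)).neg).div_const lam))
      rw [show refTraj F R (k+1) t x
          = (R t x).bind fun u => (refTraj F R k (t + 1) (F t x u)).map (finCons u) from rfl]
      rw [Measure.lintegral_bind hgk.aemeasurable hf.aemeasurable]
      have inner : ∀ u : U,
          (∫⁻ us, ENNReal.ofReal (Real.exp (-(pathCost C CT F (k+1) t x us) / lam))
            ∂((refTraj F R k (t + 1) (F t x u)).map (finCons u))) =
          ENNReal.ofReal (Real.exp
            (-(C t x u + klValue C CT F R lam k (t + 1) (F t x u)) / lam)) := by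
        intro u
        have hcu : Measurable (finCons u : (Fin k → U) → Fin (k+1) → U) :=
          measurable_finCons'.comp (measurable_const.prodMk measurable_id)
        rw [lintegral_map hf hcu]
        have hpc : ∀ vs : Fin k → U, pathCost C CT F (k+1) t x (finCons u vs)
            = C t x u + pathCost C CT F k (t+1) (F t x u) vs := by
          intro vs
          show pathCost C CT F (k+1) t x (Fin.cons u vs) = _
          simp [pathCost, Fin.cons_zero, Fin.cons_succ]
        have split : ∀ vs : Fin k → U,
            ENNReal.ofReal (Real.exp (-(pathCost C CT F (k+1) t x (finCons u vs)) / lam))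
            = ENNReal.ofReal (Real.exp (-(C t x u) / lam)) *
              ENNReal.ofReal (Real.exp (-(pathCost C CT F k (t+1) (F t x u) vs) / lam)) := by
          intro vs
          rw [← ENNReal.ofReal_mul (Real.exp_pos _).le, ← Real.exp_add,
            ← add_div, ← neg_add, hpc vs]
        simp only [split]
        have hmk : Measurable fun vs : Fin k → U =>
            ENNReal.ofReal (Real.exp (-(pathCost C CT F k (t+1) (F t x u) vs) / lam)) :=
          ENNReal.measurable_ofReal.comp (Real.measurable_exp.comp ((((hPC k (t+1)).comp
            (measurable_const.prodMk measurable_id)).neg).div_const lam))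
        rw [lintegral_const_mul _ hmk]
        rw [ih (t+1) (F t x u)]
        rw [← ENNReal.ofReal_mul (Real.exp_pos _).le, ← Real.exp_add,
          ← add_div, ← neg_add]
      simp only [inner]
      rw [← MeasureTheory.ofReal_integral_eq_lintegral_ofReal (hIfacts k t x).1
        (Filter.Eventually.of_forall fun u => (Real.exp_pos _).le)]
      rw [← key1 k t x]
  constructor
  · intro k t x
    rw [key1 k t x]
    refine integral_congr_ae (Filter.Eventually.of_forall fun u => ?_)
    simp only [← Real.exp_add, ← add_div, ← neg_add]
  · intro k t x
    haveI := (hRT k t).2 x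
    have hmeas : AEStronglyMeasurable
        (fun us : Fin k → U => Real.exp (-(pathCost C CT F k t x us) / lam))
        (refTraj F R k t x) :=
      (Real.measurable_exp.comp (((hPC k t).comp
        (measurable_const.prodMk measurable_id)).neg.div_const lam)).aestronglyMeasurable
    rw [integral_eq_lintegral_of_nonneg_ae
      (Filter.Eventually.of_forall fun us => (Real.exp_pos _).le) hmeas]
    rw [key2 k t x, ENNReal.toReal_ofReal (Real.exp_pos _).le, Real.log_exp]
    field_simp


end PathIntegral
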